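/- Let G be a non-trivial group containing a normal nilpotent subgroup N of finite index (i.e. N is normal, N is nilpotent as a group, and the quotient G/N is finite). Then the pseudocentre P(G) is non-trivial, i.e. P(G) ≠ {1}. -/

import Mathlib

/-- The pseudocentre of a group `G`: the intersection of the normal closures of the
centralizers of the elements of `G`. -/
def P (G : Type*) [Group G] : Subgroup G :=
  ⨅ g : G, Subgroup.normalClosure ↑(Subgroup.centralizer {g})

open Subgroup

section Aux

variable {G : Type*} [Group G]

private lemma g_mem_ncl (g : G) : g ∈ Subgroup.normalClosure ↑(centralizer ({g} : Set G)) :=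
  subset_normalClosure (mem_centralizer_singleton_iff.mpr rfl)

/-- Any nontrivial normal subgroup meets the normal closure of any centralizer
nontrivially. -/
private lemma meet_ne_bot {M : Subgroup G} (hM : M.Normal) (hMbot : M ≠ ⊥) (g : G) :
    Subgroup.normalClosure ↑(centralizer ({g} : Set G)) ⊓ M ≠ ⊥ := by
  intro h
  apply hMbot
  rw [eq_bot_iff]
  intro m hm
  have hCn : (Subgroup.normalClosure (G := G) ↑(centralizer ({g} : Set G))).Normal := inferInstance
  have hgC : g ∈ Subgroup.normalClosure ↑(centralizer ({g} : Set G)) := g_mem_ncl g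
  have h1 : m * g * m⁻¹ * g⁻¹ ∈ Subgroup.normalClosure ↑(centralizer ({g} : Set G)) ⊓ M := by
    apply Subgroup.mem_inf.mpr
    refine ⟨mul_mem (hCn.conj_mem g hgC m) (inv_mem hgC), ?_⟩
    have h2 : m * (g * m⁻¹ * g⁻¹) ∈ M := mul_mem hm (hM.conj_mem m⁻¹ (inv_mem hm) g)
    have h3 : m * (g * m⁻¹ * g⁻¹) = m * g * m⁻¹ * g⁻¹ := by group
    rwa [h3] at h2
  rw [h, Subgroup.mem_bot] at h1
  have hcomm : m * g = g * m := by
    have h4 : m * g * m⁻¹ = g := mul_inv_eq_one.mp h1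
    calc m * g = m * g * m⁻¹ * m := by group
    _ = g * m := by rw [h4]
  have hmC : m ∈ Subgroup.normalClosure ↑(centralizer ({g} : Set G)) :=
    subset_normalClosure (mem_centralizer_singleton_iff.mpr hcomm)
  have : m ∈ Subgroup.normalClosure ↑(centralizer ({g} : Set G)) ⊓ M :=
    Subgroup.mem_inf.mpr ⟨hmC, hm⟩
  rw [h] at this
  exact this

/-- A finite nontrivial normal subgroup contains a minimal nontrivial normal subgroup. -/
private lemma exists_minimal_normal :
    ∀ (n : ℕ) (B : Subgroup G), (B : Set G).ncard = n → B.Normal → (B : Set G).Finite →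
      B ≠ ⊥ →
    ∃ M : Subgroup G, M.Normal ∧ M ≠ ⊥ ∧ M ≤ B ∧
      ∀ K : Subgroup G, K.Normal → K ≠ ⊥ → K ≤ M → K = M := by
  intro n
  induction n using Nat.strong_induction_on with
  | _ n ih =>
    intro B hn hB hfin hbot
    by_cases hmin : ∀ K : Subgroup G, K.Normal → K ≠ ⊥ → K ≤ B → K = B
    · exact ⟨B, hB, hbot, le_rfl, hmin⟩
    · push_neg at hmin
      obtain ⟨K, hK1, hK2, hK3, hK4⟩ := hmin
      have hKfin : (K : Set G).Finite := hfin.subset (SetLike.coe_subset_coe.mpr hK3)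
      have hlt : (K : Set G).ncard < n := by
        rw [← hn]
        exact Set.ncard_lt_ncard (SetLike.coe_ssubset_coe.mpr (lt_of_le_of_ne hK3 hK4)) hfin
      obtain ⟨M, h1, h2, h3, h4⟩ := ih _ hlt K rfl hK1 hKfin hK2
      exact ⟨M, h1, h2, h3.trans hK3, h4⟩

/-- If `G` has a finite nontrivial normal subgroup, then `P G ≠ ⊥`. -/
private lemma P_ne_bot_of_finite_normal (B : Subgroup G) (hB : B.Normal)
    (hfin : (B : Set G).Finite) (hbot : B ≠ ⊥) : P G ≠ ⊥ := by
  obtain ⟨M, hM, hMbot, _, hmin⟩ := exists_minimal_normal _ B rfl hB hfin hbot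
  have hMP : M ≤ P G := by
    apply le_iInf
    intro g
    haveI := hM
    have h1 : (Subgroup.normalClosure ↑(centralizer ({g} : Set G)) ⊓ M) ≠ ⊥ := meet_ne_bot hM hMbot g
    have h2 : (Subgroup.normalClosure ↑(centralizer ({g} : Set G)) ⊓ M).Normal :=
      Subgroup.normal_inf_normal _ _
    have h3 := hmin _ h2 h1 inf_le_right
    rw [← h3]
    exact inf_le_left
  intro h
  exact hMbot (le_bot_iff.mp (h ▸ hMP))

/-- Iterated (non-commutative) product `f 0 * f 1 * ... * f (k-1)`. -/
private def iterProd {G : Type*} [Group G] (f : ℕ → G) : ℕ → G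
  | 0 => 1
  | k + 1 => iterProd f k * f k

/-- The norm argument: if `g ^ m` commutes with `z` (and `z` commutes with its
`g`-conjugates), then `z ^ m` lies in the normal closure of the centralizer of `g`. -/
private lemma pow_mem_ncl (g z : G) {m : ℕ} (hm : m ≠ 0)
    (hgmz : g ^ m * z = z * g ^ m)
    (hzf : ∀ k : ℕ, z * (g ^ k * z * (g ^ k)⁻¹) = (g ^ k * z * (g ^ k)⁻¹) * z) :
    z ^ m ∈ Subgroup.normalClosure ↑(centralizer ({g} : Set G)) := by
  obtain ⟨n, rfl⟩ : ∃ n, m = n + 1 :=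
    ⟨m - 1, (Nat.succ_pred_eq_of_pos (Nat.pos_of_ne_zero hm)).symm⟩
  have hCn : (Subgroup.normalClosure (G := G) ↑(centralizer ({g} : Set G))).Normal :=
    inferInstance
  have hgC : g ∈ Subgroup.normalClosure ↑(centralizer ({g} : Set G)) := g_mem_ncl g
  set f : ℕ → G := fun k => g ^ k * z * (g ^ k)⁻¹ with hf
  have hf0 : f 0 = z := by simp [hf]
  have hfm : f (n + 1) = z := by
    show g ^ (n + 1) * z * (g ^ (n + 1))⁻¹ = z
    rw [hgmz, mul_inv_cancel_right]
  have hshift : ∀ x : ℕ, g * f x * g⁻¹ = f (x + 1) := by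
    intro x
    show g * (g ^ x * z * (g ^ x)⁻¹) * g⁻¹ = g ^ (x + 1) * z * (g ^ (x + 1))⁻¹
    rw [pow_succ]
    group
  have claim1 : ∀ k : ℕ, iterProd f k * z⁻¹ ^ k ∈
      Subgroup.normalClosure ↑(centralizer ({g} : Set G)) := by
    intro k
    induction k with
    | zero => simpa [iterProd] using one_mem _
    | succ k ihk =>
      have key : iterProd f (k + 1) * z⁻¹ ^ (k + 1)
          = (iterProd f k * z⁻¹ ^ k) * (z ^ k * (f k * z⁻¹) * (z ^ k)⁻¹) := by
        show (iterProd f k * f k) * z⁻¹ ^ (k + 1)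
          = (iterProd f k * z⁻¹ ^ k) * (z ^ k * (f k * z⁻¹) * (z ^ k)⁻¹)
        rw [inv_pow, inv_pow, pow_succ]
        group
      rw [key]
      apply mul_mem ihk
      have h1 : g ^ k ∈ Subgroup.normalClosure ↑(centralizer ({g} : Set G)) := pow_mem hgC k
      have h2 : z * (g ^ k)⁻¹ * z⁻¹ ∈ Subgroup.normalClosure ↑(centralizer ({g} : Set G)) :=
        hCn.conj_mem _ (inv_mem h1) z
      have h3 : f k * z⁻¹ = g ^ k * (z * (g ^ k)⁻¹ * z⁻¹) := by rw [hf]; group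
      have h4 : f k * z⁻¹ ∈ Subgroup.normalClosure ↑(centralizer ({g} : Set G)) := by
        rw [h3]; exact mul_mem h1 h2
      exact hCn.conj_mem _ h4 (z ^ k)
  have hcommW : ∀ k : ℕ, z * iterProd f k = iterProd f k * z := by
    intro k
    induction k with
    | zero => simp [iterProd]
    | succ k ihk =>
      show z * (iterProd f k * f k) = (iterProd f k * f k) * z
      rw [← mul_assoc, ihk, mul_assoc, mul_assoc]
      congr 1
      exact hzf k
  have hconj : ∀ k : ℕ, g * iterProd f k * g⁻¹ = z⁻¹ * iterProd f k * f k := by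
    intro k
    induction k with
    | zero => simp [iterProd, hf0]
    | succ k ihk =>
      show g * (iterProd f k * f k) * g⁻¹ = z⁻¹ * (iterProd f k * f k) * f (k + 1)
      calc g * (iterProd f k * f k) * g⁻¹
          = (g * iterProd f k * g⁻¹) * (g * f k * g⁻¹) := by group
      _ = (z⁻¹ * iterProd f k * f k) * f (k + 1) := by rw [ihk, hshift k]
      _ = z⁻¹ * (iterProd f k * f k) * f (k + 1) := by rw [mul_assoc z⁻¹]
  have hgw : g * iterProd f (n + 1) * g⁻¹ = iterProd f (n + 1) := by
    rw [hconj (n + 1), hfm, mul_assoc, ← hcommW (n + 1)]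
    group
  have hwc : iterProd f (n + 1) ∈ Subgroup.normalClosure ↑(centralizer ({g} : Set G)) := by
    apply subset_normalClosure
    apply mem_centralizer_singleton_iff.mpr
    calc iterProd f (n + 1) * g = g * (g⁻¹ * iterProd f (n + 1) * g) := by group
    _ = g * iterProd f (n + 1) := by
        congr 1
        calc g⁻¹ * iterProd f (n + 1) * g
            = g⁻¹ * (g * iterProd f (n + 1) * g⁻¹) * g := by rw [hgw]
        _ = iterProd f (n + 1) := by group
  have hu := claim1 (n + 1)
  have hfinal : z ^ (n + 1) = (iterProd f (n + 1) * z⁻¹ ^ (n + 1))⁻¹ * iterProd f (n + 1) := by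
    rw [inv_pow]
    group
  rw [hfinal]
  exact mul_mem (inv_mem hu) hwc

/-- The centralizer of a normal subgroup is normal. -/
private lemma centralizer_normal {N : Subgroup G} (hN : N.Normal) :
    (centralizer (N : Set G)).Normal := by
  constructor
  intro c hc x
  rw [mem_centralizer_iff] at hc ⊢
  intro h hh
  have h1 : x⁻¹ * h * x ∈ N := by
    have := hN.conj_mem h hh x⁻¹
    rwa [inv_inv] at this
  have h2 : (x⁻¹ * h * x) * c = c * (x⁻¹ * h * x) := hc _ h1
  calc h * (x * c * x⁻¹) = x * ((x⁻¹ * h * x) * c) * x⁻¹ := by group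
  _ = x * (c * (x⁻¹ * h * x)) * x⁻¹ := by rw [h2]
  _ = x * c * x⁻¹ * h := by group

/-- A nontrivial nilpotent group has an element `≠ 1` in its centre. -/
private lemma exists_ne_one_mem_center (H : Type*) [Group H] [Group.IsNilpotent H]
    [Nontrivial H] : ∃ c : H, c ∈ Subgroup.center H ∧ c ≠ 1 := by
  have hcne : Subgroup.center H ≠ ⊥ := by
    intro hbot
    obtain ⟨k, hk⟩ := Group.IsNilpotent.nilpotent H
    have hall : ∀ n, Subgroup.upperCentralSeries H n = ⊥ := by
      intro n
      induction n with
      | zero => exact Subgroup.upperCentralSeries_zero H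
      | succ n ihn =>
        rw [eq_bot_iff]
        intro x hx
        have hxc : x ∈ Subgroup.center H := by
          rw [Subgroup.mem_center_iff]
          intro y
          have h1 := (Subgroup.mem_upperCentralSeries_succ_iff).mp hx y
          rw [ihn, Subgroup.mem_bot] at h1
          have h2 : x * y * x⁻¹ = y := mul_inv_eq_one.mp h1
          calc y * x = x * y * x⁻¹ * x := by rw [h2]
          _ = x * y := by group
        rw [hbot] at hxc
        exact hxc
    rw [hall k] at hk
    obtain ⟨a, b, hab⟩ := exists_pair_ne H
    apply hab
    have ha : a ∈ (⊥ : Subgroup H) := hk ▸ Subgroup.mem_top a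
    have hb : b ∈ (⊥ : Subgroup H) := hk ▸ Subgroup.mem_top b
    rw [Subgroup.mem_bot] at ha hb
    rw [ha, hb]
  have : Nontrivial (Subgroup.center H) := (Subgroup.nontrivial_iff_ne_bot _).mpr hcne
  obtain ⟨x, hx⟩ := exists_ne (1 : Subgroup.center H)
  refine ⟨(x : H), x.2, fun h => hx ?_⟩
  exact Subtype.ext h

end Aux

/-- A non-trivial nilpotent-by-finite group has a non-trivial pseudocentre. -/
theorem pseudocentre_ne_bot_of_nilpotent_by_finite {G : Type*} [Group G] [Nontrivial G]
    (N : Subgroup G) (hN : N.Normal) (hnilp : Group.IsNilpotent N)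
    (hfin : Finite (G ⧸ N)) :
    P G ≠ ⊥ := by
  classical
  haveI := hfin
  haveI := hN
  have hmpos : Nat.card (G ⧸ N) ≠ 0 := Nat.pos_iff_ne_zero.mp Nat.card_pos
  by_cases hA : ∃ z ∈ N ⊓ centralizer (N : Set G), z ^ Nat.card (G ⧸ N) ≠ 1
  · -- an element of infinite-ish order in the centre of N gives an element of P G
    obtain ⟨z, hz, hzne⟩ := hA
    rw [Subgroup.mem_inf] at hz
    intro hP
    apply hzne
    have hmem : z ^ Nat.card (G ⧸ N) ∈ P G := by
      rw [P, Subgroup.mem_iInf]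
      intro g
      apply pow_mem_ncl g z hmpos
      · have hgm : g ^ Nat.card (G ⧸ N) ∈ N := by
          have h1 : ((g ^ Nat.card (G ⧸ N) : G) : G ⧸ N) = 1 := by
            rw [QuotientGroup.mk_pow]
            exact pow_card_eq_one'
          exact (QuotientGroup.eq_one_iff _).mp h1
        exact mem_centralizer_iff.mp hz.2 _ hgm
      · intro k
        have hconjN : g ^ k * z * (g ^ k)⁻¹ ∈ N := hN.conj_mem z hz.1 (g ^ k)
        exact (mem_centralizer_iff.mp hz.2 _ hconjN).symm
    rw [hP] at hmem
    exact Subgroup.mem_bot.mp hmem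
  · push_neg at hA
    by_cases hNbot : N = ⊥
    · -- G is finite; use a minimal normal subgroup of G
      subst hNbot
      haveI : Finite G := Finite.of_equiv _ (QuotientGroup.quotientBot (G := G)).toEquiv
      apply P_ne_bot_of_finite_normal ⊤ inferInstance (Set.toFinite _)
      intro h
      obtain ⟨a, ha⟩ := exists_ne (1 : G)
      exact ha (Subgroup.mem_bot.mp (h ▸ Subgroup.mem_top a))
    · -- use the normal closure of a nontrivial element of the centre of N
      haveI : Nontrivial N := (Subgroup.nontrivial_iff_ne_bot N).mpr hNbot
      haveI := hnilp
      obtain ⟨c, hc, hcne⟩ := exists_ne_one_mem_center ↥N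
      set z : G := (c : G) with hzdef
      have hzN : z ∈ N := c.2
      have hzc : z ∈ centralizer (N : Set G) := by
        rw [mem_centralizer_iff]
        intro x hx
        have h1 := Subgroup.mem_center_iff.mp hc ⟨x, hx⟩
        exact congrArg Subtype.val h1
      have hzne : z ≠ 1 := fun h => hcne (Subtype.ext h)
      haveI hZn : (N ⊓ centralizer (N : Set G)).Normal :=
        Subgroup.normal_inf_normal N _ (hK := centralizer_normal hN)
      have hzZ : z ∈ N ⊓ centralizer (N : Set G) := Subgroup.mem_inf.mpr ⟨hzN, hzc⟩
      -- the set of conjugates of z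
      set S : Set G := Group.conjugatesOfSet ({z} : Set G) with hS
      have hSZ : S ⊆ (N ⊓ centralizer (N : Set G) : Subgroup G) := by
        intro b hb
        obtain ⟨a, ha, hab⟩ := Group.mem_conjugatesOfSet_iff.mp hb
        rw [Set.mem_singleton_iff] at ha
        subst ha
        obtain ⟨u, hu⟩ := isConj_iff.mp hab
        rw [← hu]
        exact hZn.conj_mem z hzZ u
      have hwd : ∀ x y : G, x⁻¹ * y ∈ N → x * z * x⁻¹ = y * z * y⁻¹ := by
        intro x y hxy
        have h1 : (x⁻¹ * y) * z = z * (x⁻¹ * y) := mem_centralizer_iff.mp hzc _ hxy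
        have h2 : (x⁻¹ * y) * z * (x⁻¹ * y)⁻¹ = z := by rw [h1, mul_inv_cancel_right]
        calc x * z * x⁻¹ = x * z * x⁻¹ := rfl
        _ = y * z * y⁻¹ := by
            conv_rhs => rw [show y * z * y⁻¹ = x * ((x⁻¹ * y) * z * (x⁻¹ * y)⁻¹) * x⁻¹ by group]
            rw [h2]
      have hSfin : S.Finite := by
        have hsub : S ⊆ Set.range (fun q : G ⧸ N =>
            Quotient.liftOn' q (fun x => x * z * x⁻¹)
              (fun a b h => hwd a b (QuotientGroup.leftRel_apply.mp h))) := by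
          intro b hb
          obtain ⟨a, ha, hab⟩ := Group.mem_conjugatesOfSet_iff.mp hb
          rw [Set.mem_singleton_iff] at ha
          subst ha
          obtain ⟨u, hu⟩ := isConj_iff.mp hab
          exact ⟨QuotientGroup.mk u, hu⟩
        exact (Set.finite_range _).subset hsub
      set B : Subgroup G := Subgroup.normalClosure ({z} : Set G) with hB
      have hBS : B = Subgroup.closure S := rfl
      have hBle : B ≤ N ⊓ centralizer (N : Set G) := by
        rw [hBS]
        exact (Subgroup.closure_le _).mpr hSZ
      haveI hBcomm : IsMulCommutative B := by
        constructor
        constructor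
        intro a b
        apply Subtype.ext
        have haZ := hBle a.2
        have hbZ := hBle b.2
        rw [Subgroup.mem_inf] at haZ hbZ
        exact mem_centralizer_iff.mp hbZ.2 _ haZ.1
      haveI : Finite ↥S := hSfin.to_subtype
      haveI hBfg : Group.FG ↥B := by
        rw [hBS]
        exact Group.closure_finite_fg S
      have hBtor : Monoid.IsTorsion ↥B := by
        intro x
        apply isOfFinOrder_iff_pow_eq_one.mpr
        refine ⟨Nat.card (G ⧸ N), Nat.pos_of_ne_zero hmpos, ?_⟩
        apply Subtype.ext
        push_cast
        exact hA _ (hBle x.2)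
      haveI : Finite ↥B := by open scoped IsMulCommutative in exact CommGroup.finite_of_fg_torsion ↥B hBtor
      apply P_ne_bot_of_finite_normal B normalClosure_normal (Set.toFinite _)
      intro h
      apply hzne
      have : z ∈ B := subset_normalClosure (Set.mem_singleton z)
      rw [h] at this
      exact Subgroup.mem_bot.mp this
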